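/- If {χ(μ)}_{μ∈E} is a family of |E| = |C| common eigenvector functionals of a commutative family of |C|×|C| matrices {N_y}_{y∈C} with nonnegative integer entries, N_1 = Id, satisfying N_x N_y = Σ_z N^z_{x,y} N_z with χ_x(μ)χ_y(μ) = Σ_z N^z_{x,y} χ_z(μ), χ_1(μ)=1, and the vectors χ(μ) are pairwise distinct, then the vectors are pairwise orthogonal with respect to the hermitian form using conjugation N^1_{x,y} = δ_{x,y*}, and the normalized matrix ψ_y^{(μ)} = χ_y(μ)(Σ_u |χ_u(μ)|²)^{-1/2} is unitary, giving N^z_{x,y} = Σ_μ ψ_x^{(μ)} ψ_y^{(μ)} ψ_z^{(μ)*} / ψ_1^{(μ)}. -/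

import Mathlib

open scoped BigOperators

/-- diagonalization of a fusion (C-)algebra.  Given a commutative
family of `|C|×|C|` matrices with nonnegative integer structure constants
`N^z_{x,y}`, identity `N_1 = Id`, involution `*` with `N^1_{x,y} = δ_{x,y*}` and
`N^z_{x,y} = N^{y*}_{x,z*}`, `χ_{x*} = χ̄_x`, and a family `{χ(μ)}_{μ∈E}`,
`|E| = |C|`, of pairwise distinct common eigenvector functionals
(`χ_x(μ)χ_y(μ) = Σ_z N^z_{x,y} χ_z(μ)`, `χ_1(μ) = 1`): then the vectors `χ(μ)` are
pairwise orthogonal for the hermitian form, the normalized matrix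
`ψ_y^{(μ)} = χ_y(μ)(Σ_u |χ_u(μ)|²)^{-1/2}` is unitary, and the Verlinde-type
inversion `N^z_{x,y} = Σ_μ ψ_x^{(μ)} ψ_y^{(μ)} ψ_z^{(μ)*}/ψ_1^{(μ)}` holds. -/
theorem statement19 {C E : Type*} [Fintype C] [Fintype E] [DecidableEq C] [DecidableEq E]
    (hcard : Fintype.card E = Fintype.card C)
    (Nc : C → C → C → ℕ) (one : C) (star : C → C) (χ : C → E → ℂ)
    (hinvol : ∀ x, star (star x) = x)
    (hone : ∀ μ, χ one μ = 1)
    (hNone : ∀ x z, Nc one x z = if x = z then 1 else 0)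
    (hNcomm : ∀ x y z, Nc x y z = Nc y x z)
    (heig : ∀ x y μ, χ x μ * χ y μ = ∑ z, (Nc x y z : ℂ) * χ z μ)
    (hdual : ∀ x y, Nc x y one = if y = star x then 1 else 0)
    (hsym : ∀ x y z, Nc x y z = Nc x (star z) (star y))
    (hconj : ∀ x μ, χ (star x) μ = (starRingEnd ℂ) (χ x μ))
    (hdist : ∀ μ μ' : E, (∀ x, χ x μ = χ x μ') → μ = μ') :
    let ψ : C → E → ℂ := fun y μ =>
      χ y μ * ((Real.sqrt (∑ u, ‖χ u μ‖ ^ 2) : ℂ))⁻¹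
    (∀ μ μ' : E, μ ≠ μ' → ∑ x, χ x μ * (starRingEnd ℂ) (χ x μ') = 0) ∧
    (∀ μ μ' : E, ∑ x, ψ x μ * (starRingEnd ℂ) (ψ x μ') = if μ = μ' then 1 else 0) ∧
    (∀ x y : C, ∑ μ, ψ x μ * (starRingEnd ℂ) (ψ y μ) = if x = y then 1 else 0) ∧
    (∀ x y z : C, (Nc x y z : ℂ) =
      ∑ μ, ψ x μ * ψ y μ * (starRingEnd ℂ) (ψ z μ) / ψ one μ) := by
  intro ψ
  set s : E → ℝ := fun μ => Real.sqrt (∑ u, ‖χ u μ‖ ^ 2) with hs_def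
  have hψ' : ∀ y μ, ψ y μ = χ y μ * ((s μ : ℂ))⁻¹ := fun y μ => rfl
  have hsumpos : ∀ μ, 0 < ∑ u, ‖χ u μ‖ ^ 2 := by
    intro μ
    have h1 : ‖χ one μ‖ ^ 2 = 1 := by rw [hone]; simp
    have h2 : (1:ℝ) ≤ ∑ u, ‖χ u μ‖ ^ 2 := by
      rw [← h1]
      exact Finset.single_le_sum (f := fun u => ‖χ u μ‖ ^ 2)
        (fun u _ => sq_nonneg _) (Finset.mem_univ one)
    linarith
  have hspos : ∀ μ, 0 < s μ := fun μ => Real.sqrt_pos.mpr (hsumpos μ)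
  have hsne : ∀ μ, ((s μ : ℂ)) ≠ 0 := fun μ =>
    Complex.ofReal_ne_zero.mpr (ne_of_gt (hspos μ))
  have hsq : ∀ μ, ((s μ : ℂ))^2 = ((∑ u, ‖χ u μ‖ ^ 2 : ℝ) : ℂ) := by
    intro μ
    rw [← Complex.ofReal_pow]
    norm_cast
    exact Real.sq_sqrt (le_of_lt (hsumpos μ))
  have hconjs : ∀ μ, (starRingEnd ℂ) ((s μ : ℂ)) = (s μ : ℂ) := fun μ =>
    Complex.conj_ofReal _
  have hconj' : ∀ x μ, (starRingEnd ℂ) (χ x μ) = χ (star x) μ := fun x μ => (hconj x μ).symm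
  have hstarbij : Function.Bijective star :=
    Function.bijective_iff_has_inverse.mpr ⟨star, hinvol, hinvol⟩
  -- Part 1: orthogonality
  have orth : ∀ μ μ' : E, μ ≠ μ' → ∑ x, χ x μ * (starRingEnd ℂ) (χ x μ') = 0 := by
    intro μ μ' hne
    obtain ⟨x0, hx0⟩ : ∃ x, χ x μ ≠ χ x μ' := by
      by_contra h
      push_neg at h
      exact hne (hdist μ μ' h)
    set S := ∑ x, χ x μ * (starRingEnd ℂ) (χ x μ') with hS
    have key : χ x0 μ * S = χ x0 μ' * S := by
      calc χ x0 μ * S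
          = ∑ x, ∑ z, ((Nc x0 x z : ℂ) * χ (star x) μ') * χ z μ := by
            rw [hS, Finset.mul_sum]
            refine Finset.sum_congr rfl fun x _ => ?_
            rw [show χ x0 μ * (χ x μ * (starRingEnd ℂ) (χ x μ'))
                = (χ x0 μ * χ x μ) * (starRingEnd ℂ) (χ x μ') by ring, heig, hconj',
              Finset.sum_mul]
            exact Finset.sum_congr rfl fun z _ => by ring
        _ = ∑ z, (∑ x, (Nc x0 x z : ℂ) * χ (star x) μ') * χ z μ := by
            rw [Finset.sum_comm]
            exact Finset.sum_congr rfl fun z _ => (Finset.sum_mul _ _ _).symm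
        _ = ∑ z, (χ x0 μ' * χ (star z) μ') * χ z μ := by
            refine Finset.sum_congr rfl fun z _ => ?_
            congr 1
            have h1 : ∀ x, ((Nc x0 x z : ℂ)) * χ (star x) μ'
                = (Nc x0 (star z) (star x) : ℂ) * χ (star x) μ' := by
              intro x; rw [← hsym]
            rw [Finset.sum_congr rfl fun x _ => h1 x]
            rw [heig x0 (star z) μ']
            exact Fintype.sum_bijective star hstarbij _ _ (fun x => rfl)
        _ = χ x0 μ' * S := by
            rw [hS, Finset.mul_sum]
            refine Finset.sum_congr rfl fun z _ => ?_
            rw [hconj']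
            ring
    have hz : (χ x0 μ - χ x0 μ') * S = 0 := by linear_combination key
    rcases mul_eq_zero.mp hz with h | h
    · exact absurd (sub_eq_zero.mp h) hx0
    · exact h
  -- Part 2: row orthonormality
  have rows : ∀ μ μ' : E, ∑ x, ψ x μ * (starRingEnd ℂ) (ψ x μ') = if μ = μ' then 1 else 0 := by
    intro μ μ'
    by_cases h : μ = μ'
    · subst h
      rw [if_pos rfl]
      have hterm : ∀ x, ψ x μ * (starRingEnd ℂ) (ψ x μ)
          = ((‖χ x μ‖ ^ 2 : ℝ) : ℂ) * (((s μ : ℂ))^2)⁻¹ := by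
        intro x
        rw [hψ', map_mul, map_inv₀, hconjs]
        rw [show χ x μ * ((s μ : ℂ))⁻¹ * ((starRingEnd ℂ) (χ x μ) * ((s μ : ℂ))⁻¹)
            = (χ x μ * (starRingEnd ℂ) (χ x μ)) * (((s μ : ℂ))^2)⁻¹ by
          rw [sq, mul_inv]; ring]
        congr 1
        rw [Complex.mul_conj, Complex.sq_norm]
      rw [Finset.sum_congr rfl fun x _ => hterm x, ← Finset.sum_mul, hsq,
        ← Complex.ofReal_sum]
      exact mul_inv_cancel₀ (by
        rw [Complex.ofReal_ne_zero]
        exact ne_of_gt (hsumpos μ))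
    · rw [if_neg h]
      have hterm : ∀ x, ψ x μ * (starRingEnd ℂ) (ψ x μ')
          = (χ x μ * (starRingEnd ℂ) (χ x μ')) * (((s μ : ℂ))⁻¹ * ((s μ' : ℂ))⁻¹) := by
        intro x
        rw [hψ', hψ', map_mul, map_inv₀, hconjs]
        ring
      rw [Finset.sum_congr rfl fun x _ => hterm x, ← Finset.sum_mul, orth μ μ' h, zero_mul]
  -- Part 3: column orthonormality
  have e : C ≃ E := Fintype.equivOfCardEq hcard.symm
  have cols : ∀ x y : C, ∑ μ, ψ x μ * (starRingEnd ℂ) (ψ y μ) = if x = y then 1 else 0 := by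
    have hM : (Matrix.of fun (i : C) (k : C) => ψ k (e i))
        * Matrix.conjTranspose (Matrix.of fun (i : C) (k : C) => ψ k (e i)) = (1 : Matrix C C ℂ) := by
      ext i j
      rw [Matrix.mul_apply, Matrix.one_apply]
      simp only [Matrix.conjTranspose_apply, Matrix.of_apply, ← starRingEnd_apply]
      rw [rows (e i) (e j)]
      simp [e.injective.eq_iff]
    have hM2 := mul_eq_one_comm.mp hM
    intro x y
    have h3 : ∑ i : C, (starRingEnd ℂ) (ψ x (e i)) * ψ y (e i) = if x = y then 1 else 0 := by
      have h4 := Matrix.ext_iff.mpr hM2 x y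
      rw [Matrix.mul_apply, Matrix.one_apply] at h4
      simpa only [Matrix.conjTranspose_apply, Matrix.of_apply, ← starRingEnd_apply] using h4
    have h5 : ∑ μ, (starRingEnd ℂ) (ψ x μ) * ψ y μ = if x = y then 1 else 0 := by
      rw [← h3]
      exact (Fintype.sum_bijective e e.bijective _ _ (fun i => rfl)).symm
    calc ∑ μ, ψ x μ * (starRingEnd ℂ) (ψ y μ)
        = (starRingEnd ℂ) (∑ μ, (starRingEnd ℂ) (ψ x μ) * ψ y μ) := by
          rw [map_sum]
          refine Finset.sum_congr rfl fun μ _ => ?_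
          simp only [map_mul, Complex.conj_conj, RingHomCompTriple.comp_apply, RingHom.id_apply]
      _ = (starRingEnd ℂ) (if x = y then 1 else 0) := by rw [h5]
      _ = if x = y then 1 else 0 := by split <;> simp
  refine ⟨orth, rows, cols, ?_⟩
  -- Part 4: Verlinde
  intro x y z
  have hterm : ∀ μ, ψ x μ * ψ y μ * (starRingEnd ℂ) (ψ z μ) / ψ one μ
      = ∑ w, (Nc x y w : ℂ) * (ψ w μ * (starRingEnd ℂ) (ψ z μ)) := by
    intro μ
    have hne : ((s μ : ℂ))⁻¹ ≠ 0 := inv_ne_zero (hsne μ)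
    rw [hψ' x, hψ' y, hψ' z, hψ' one, hone, one_mul]
    rw [map_mul, map_inv₀, hconjs]
    rw [show χ x μ * (s μ : ℂ)⁻¹ * (χ y μ * (s μ : ℂ)⁻¹)
          * ((starRingEnd ℂ) (χ z μ) * (s μ : ℂ)⁻¹) / (s μ : ℂ)⁻¹
        = (χ x μ * χ y μ) * ((starRingEnd ℂ) (χ z μ) * ((s μ : ℂ)⁻¹ * (s μ : ℂ)⁻¹)) by
      field_simp]
    rw [heig, Finset.sum_mul]
    refine Finset.sum_congr rfl fun w _ => ?_
    rw [hψ' w]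
    ring
  rw [Finset.sum_congr rfl fun μ _ => hterm μ, Finset.sum_comm]
  rw [Finset.sum_congr rfl fun w _ => by rw [← Finset.mul_sum, cols w z]]
  simp
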